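/- arXiv:2402.09896 — 2 statements merged into one kernel-verified Lean document; each statement's English description precedes it below -/
import Mathlib

section
/- Let σ², τ, E_u, β̂, β̃_g, σ_v², λ_RIS, λ_BS, β̄ be positive reals (with β̃_g·σ_v² allowed to be 0), and suppose that (1/N)·Σ_{i=1}^N α_i(β_i^{w_k})² → s > 0 and (1/N)·Σ_{j=1}^K Σ_{i=1}^N α_i(β_i^{w_j})² → s' ≥ 0 as N → ∞. Under the power scaling p = E_u/N, the normalized MSE, NMSE_N = d_N/(a_N + c_N + d_N) with d_N = σ²·N/(τ·E_u), a_N = β̄ + β̂·λ_RIS·λ_BS·Σ_{i=1}^N α_i(β_i^{w_k})², and c_N = β̃_g·σ_v²·λ_RIS·λ_BS·Σ_{j=1}^K Σ_{i=1}^N α_i(β_i^{w_j})², converges as N → ∞ to σ²/(τ·E_u·β̂·λ_RIS·λ_BS·s + τ·E_u·β̃_g·σ_v²·λ_RIS·λ_BS·s' + σ²), a limit strictly less than 1. (This is the paper's power-scaling law for channel estimation: with pilot power scaled as E_u/N, the NMSE converges to a limit below one as the surface grows.) -/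
open Filter Topology Finset

lemma div_eq_div_div_of_ne (a b c : ℝ) (hc : c ≠ 0) : a / b = (a / c) / (b / c) := by
  rcases eq_or_ne b 0 with hb | hb
  · simp [hb]
  · field_simp

/-- Power-scaling law for channel estimation: with pilot power scaled as `p = E_u/N`,
the NMSE converges, as the surface grows (`N → ∞`), to
`σ²/(τ·E_u·β̂·λ_RIS·λ_BS·s + τ·E_u·β̃_g·σ_v²·λ_RIS·λ_BS·s' + σ²) < 1`. -/
theorem stmt_7 (K : ℕ) (hK : 0 < K)
    (σ2 τ Eu βhat βg σv2 lRIS lBS βbar : ℝ)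
    (hσ2 : 0 < σ2) (hτ : 0 < τ) (hEu : 0 < Eu) (hβhat : 0 < βhat)
    (hβg : 0 ≤ βg) (hσv2 : 0 ≤ σv2) (hlRIS : 0 < lRIS) (hlBS : 0 < lBS) (hβbar : 0 < βbar)
    (α : ℕ → ℝ) (β : ℕ → Fin K → ℝ) (k : Fin K)
    (s s' : ℝ) (hs : 0 < s) (hs' : 0 ≤ s')
    (hsum : Tendsto
      (fun N : ℕ => (1 / (N : ℝ)) * ∑ i ∈ Finset.range N, α i * (β i k) ^ 2) atTop (𝓝 s))
    (hsum' : Tendsto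
      (fun N : ℕ => (1 / (N : ℝ)) * ∑ j : Fin K, ∑ i ∈ Finset.range N, α i * (β i j) ^ 2)
      atTop (𝓝 s'))
    (dN aN cN NMSE : ℕ → ℝ)
    (hdN : ∀ N, dN N = σ2 * N / (τ * Eu))
    (haN : ∀ N, aN N = βbar + βhat * lRIS * lBS * ∑ i ∈ Finset.range N, α i * (β i k) ^ 2)
    (hcN : ∀ N, cN N
      = βg * σv2 * lRIS * lBS * ∑ j : Fin K, ∑ i ∈ Finset.range N, α i * (β i j) ^ 2)
    (hNMSE : ∀ N, NMSE N = dN N / (aN N + cN N + dN N)) :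
    Tendsto NMSE atTop
        (𝓝 (σ2 / (τ * Eu * βhat * lRIS * lBS * s + τ * Eu * βg * σv2 * lRIS * lBS * s' + σ2)))
      ∧ σ2 / (τ * Eu * βhat * lRIS * lBS * s + τ * Eu * βg * σv2 * lRIS * lBS * s' + σ2) < 1 := by
  have hτEu : 0 < τ * Eu := mul_pos hτ hEu
  set A := βhat * lRIS * lBS * s with hA
  set C := βg * σv2 * lRIS * lBS * s' with hC
  have hApos : 0 < A := by positivity
  have hCnn : 0 ≤ C := by positivity
  have hd : (0:ℝ) < σ2 / (τ * Eu) := by positivity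
  have hDpos : 0 < A + C + σ2 / (τ * Eu) := by positivity
  -- limits of aN/N and cN/N
  have hNinv : Tendsto (fun N : ℕ => (1 / (N : ℝ))) atTop (𝓝 0) := by
    simpa using (tendsto_one_div_atTop_nhds_zero_nat : Tendsto (fun n : ℕ => 1 / (n : ℝ)) atTop (𝓝 0))
  have ha : Tendsto (fun N : ℕ => aN N / N) atTop (𝓝 A) := by
    have : Tendsto (fun N : ℕ => βbar * (1 / (N : ℝ)) +
        βhat * lRIS * lBS * ((1 / (N : ℝ)) * ∑ i ∈ Finset.range N, α i * (β i k) ^ 2))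
        atTop (𝓝 (βbar * 0 + βhat * lRIS * lBS * s)) :=
      ((hNinv.const_mul βbar).add (hsum.const_mul _))
    rw [mul_zero, zero_add] at this
    refine this.congr' ?_
    filter_upwards [eventually_ge_atTop 1] with N hN
    have hN0 : (N : ℝ) ≠ 0 := by positivity
    rw [haN]; field_simp
  have hc : Tendsto (fun N : ℕ => cN N / N) atTop (𝓝 C) := by
    have : Tendsto (fun N : ℕ => βg * σv2 * lRIS * lBS *
        ((1 / (N : ℝ)) * ∑ j : Fin K, ∑ i ∈ Finset.range N, α i * (β i j) ^ 2))
        atTop (𝓝 (βg * σv2 * lRIS * lBS * s')) := hsum'.const_mul _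
    refine this.congr' ?_
    filter_upwards [eventually_ge_atTop 1] with N hN
    have hN0 : (N : ℝ) ≠ 0 := by positivity
    rw [hcN]; field_simp
  have hlim : Tendsto (fun N : ℕ => (σ2 / (τ * Eu)) / (aN N / N + cN N / N + σ2 / (τ * Eu)))
      atTop (𝓝 ((σ2 / (τ * Eu)) / (A + C + σ2 / (τ * Eu)))) :=
    tendsto_const_nhds.div ((ha.add hc).add tendsto_const_nhds) (ne_of_gt hDpos)
  have hLeq : (σ2 / (τ * Eu)) / (A + C + σ2 / (τ * Eu))
      = σ2 / (τ * Eu * βhat * lRIS * lBS * s + τ * Eu * βg * σv2 * lRIS * lBS * s' + σ2) := by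
    rw [hA, hC]
    have h1 : τ * Eu * βhat * lRIS * lBS * s + τ * Eu * βg * σv2 * lRIS * lBS * s' + σ2 > 0 := by
      nlinarith [mul_pos hτEu hApos, mul_nonneg hτEu.le hCnn]
    field_simp
  constructor
  · rw [← hLeq]
    refine hlim.congr' ?_
    filter_upwards [eventually_ge_atTop 1] with N hN
    have hN0 : (N : ℝ) ≠ 0 := by positivity
    have hdNN : dN N / N = σ2 / (τ * Eu) := by rw [hdN]; field_simp
    rw [hNMSE, div_eq_div_div_of_ne (dN N) (aN N + cN N + dN N) N hN0, add_div, add_div, hdNN]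
  · rw [← hLeq]
    rw [div_lt_one hDpos]
    linarith
end

section
/- Let K be a positive integer, let β̄_1, …, β̄_K, σ², τ, E_d be positive reals, and fix a user index k. For each positive integer M set p_M = E_d/√M, d_M = σ²/(τ·p_M) = σ²·√M/(τ·E_d), and γ_k(M) = M·(β̄_k²/(β̄_k + d_M))² / (Σ_{i=1}^K β̄_k·β̄_i²/(β̄_i + d_M) + (K·σ²/p_M)·Σ_{i=1}^K β̄_i²/(β̄_i + d_M)). Then γ_k(M) converges as M → ∞ to the finite positive limit τ·E_d²·β̄_k⁴ / (σ⁴·K·Σ_{i=1}^K β̄_i²); consequently the per-user spectral efficiency log₂(1 + γ_k(M)) maintains a non-zero limit even though the transmit power is scaled down as p_M = E_d/√M. (This is the paper's power-scaling law for the no-surface massive MIMO benchmark.) -/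
open Filter Topology Finset

/-- Power-scaling law for the no-surface massive MIMO benchmark: with transmit power
`p_M = E_d/√M`, the SINR `γ_k(M)` converges, as `M → ∞`, to the finite positive limit
`τ·E_d²·β̄_k⁴ / (σ⁴·K·Σ_i β̄_i²)`, so the per-user spectral efficiency
`log₂(1 + γ_k(M))` maintains a non-zero limit. -/
theorem stmt_13 (K : ℕ) (hK : 0 < K)
    (βbar : Fin K → ℝ) (hβbar : ∀ i, 0 < βbar i)
    (σ2 τ Ed : ℝ) (hσ2 : 0 < σ2) (hτ : 0 < τ) (hEd : 0 < Ed)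
    (k : Fin K)
    (p d : ℕ → ℝ) (γ : ℕ → ℝ)
    (hp : ∀ M : ℕ, p M = Ed / Real.sqrt M)
    (hd : ∀ M : ℕ, d M = σ2 * Real.sqrt M / (τ * Ed))
    (hγ : ∀ M : ℕ, γ M
      = (M : ℝ) * (βbar k ^ 2 / (βbar k + d M)) ^ 2
        / (∑ i : Fin K, βbar k * (βbar i ^ 2 / (βbar i + d M))
            + (K * σ2 / p M) * ∑ i : Fin K, βbar i ^ 2 / (βbar i + d M)))
    (L : ℝ)
    (hL : L = τ * Ed ^ 2 * βbar k ^ 4 / (σ2 ^ 2 * K * ∑ i : Fin K, βbar i ^ 2)) :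
    Tendsto γ atTop (𝓝 L) ∧ 0 < L ∧
      Tendsto (fun M : ℕ => Real.logb 2 (1 + γ M)) atTop (𝓝 (Real.logb 2 (1 + L))) ∧
      Real.logb 2 (1 + L) ≠ 0 := by
  haveI : Nonempty (Fin K) := ⟨⟨0, hK⟩⟩
  have hKne : (K : ℝ) ≠ 0 := Nat.cast_ne_zero.mpr hK.ne'
  have hKpos : (0:ℝ) < K := Nat.cast_pos.mpr hK
  set c : ℝ := σ2 / (τ * Ed) with hc
  have hcpos : 0 < c := by positivity
  have hSpos : 0 < ∑ i : Fin K, βbar i ^ 2 :=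
    Finset.sum_pos (fun i _ => pow_pos (hβbar i) 2) Finset.univ_nonempty
  set h : ℝ → ℝ := fun t =>
    (βbar k ^ 2 / (βbar k * t + c)) ^ 2 /
      ((∑ i : Fin K, βbar k * (βbar i ^ 2 * t / (βbar i * t + c)))
        + (K * σ2 / Ed) * ∑ i : Fin K, βbar i ^ 2 / (βbar i * t + c)) with hh
  -- h 0 = L
  have hL0 : h 0 = L := by
    rw [hh, hL]
    simp only [mul_zero, zero_add, zero_div, mul_zero, Finset.sum_const_zero, zero_add]
    rw [← Finset.sum_div, hc]
    field_simp
  have hcont : ContinuousAt h 0 := by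
    rw [hh]
    apply ContinuousAt.div
    · apply ContinuousAt.pow
      exact ContinuousAt.div (by fun_prop) (by fun_prop) (by simp [hcpos.ne'])
    · apply ContinuousAt.add
      · exact tendsto_finset_sum _ fun i _ =>
          ContinuousAt.mul continuousAt_const
            (ContinuousAt.div (by fun_prop) (by fun_prop) (by simp [hcpos.ne']))
      · exact ContinuousAt.mul continuousAt_const
          (tendsto_finset_sum _ fun i _ =>
            ContinuousAt.div (by fun_prop) (by fun_prop) (by simp [hcpos.ne']))
    · simp only [mul_zero, zero_add, zero_div, Finset.sum_const_zero, zero_add]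
      rw [← Finset.sum_div]
      positivity
  have hsqrt : Tendsto (fun M : ℕ => 1 / Real.sqrt M) atTop (𝓝 0) := by
    have h1 : Tendsto (fun M : ℕ => (1 : ℝ) / M) atTop (𝓝 0) :=
      tendsto_one_div_atTop_nhds_zero_nat
    have h2 := h1.sqrt
    rw [Real.sqrt_zero] at h2
    refine h2.congr fun M => ?_
    rw [one_div, Real.sqrt_inv, one_div]
  -- key pointwise identity
  have key : ∀ M : ℕ, 1 ≤ M → γ M = h (1 / Real.sqrt M) := by
    intro M hM
    have hMpos : (0:ℝ) < M := by exact_mod_cast hM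
    set s : ℝ := Real.sqrt M with hsdef
    have hs : 0 < s := Real.sqrt_pos.mpr hMpos
    have hs2 : s ^ 2 = M := Real.sq_sqrt hMpos.le
    have hne : ∀ i : Fin K, βbar i + c * s ≠ 0 :=
      fun i => (add_pos (hβbar i) (mul_pos hcpos hs)).ne'
    have h1 : ∀ i : Fin K, βbar i * (1 / s) + c = (βbar i + c * s) / s := by
      intro i; field_simp
    have hdcs : d M = c * s := by rw [hd M, hc]; ring
    rw [hγ M, hdcs, hp M, hh]
    simp only [← hsdef, h1]
    have e1 : (βbar k ^ 2 / ((βbar k + c * s) / s)) ^ 2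
        = (M : ℝ) * (βbar k ^ 2 / (βbar k + c * s)) ^ 2 := by
      rw [← hs2, div_div_eq_mul_div, div_pow, div_pow]
      ring
    have e2 : (∑ i : Fin K, βbar k * (βbar i ^ 2 * (1 / s) / ((βbar i + c * s) / s)))
        = ∑ i : Fin K, βbar k * (βbar i ^ 2 / (βbar i + c * s)) := by
      refine Finset.sum_congr rfl fun i _ => ?_
      rw [div_div_eq_mul_div]
      congr 1
      field_simp
    have e3 : (↑K * σ2 / Ed) * (∑ i : Fin K, βbar i ^ 2 / ((βbar i + c * s) / s))
        = (↑K * σ2 / (Ed / s)) * ∑ i : Fin K, βbar i ^ 2 / (βbar i + c * s) := by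
      have : ∀ i : Fin K, βbar i ^ 2 / ((βbar i + c * s) / s)
          = s * (βbar i ^ 2 / (βbar i + c * s)) := by
        intro i
        rw [div_div_eq_mul_div]
        ring
      rw [Finset.sum_congr rfl fun i _ => this i, ← Finset.mul_sum, ← mul_assoc]
      congr 1
      field_simp
    rw [e1, e2, e3]
  have htend : Tendsto γ atTop (𝓝 L) := by
    have : Tendsto (fun M : ℕ => h (1 / Real.sqrt M)) atTop (𝓝 (h 0)) :=
      hcont.tendsto.comp hsqrt
    rw [hL0] at this
    refine this.congr' ?_
    filter_upwards [eventually_ge_atTop 1] with M hM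
    exact (key M hM).symm
  have hLpos : 0 < L := by
    rw [hL]
    exact div_pos (mul_pos (mul_pos hτ (pow_pos hEd 2)) (pow_pos (hβbar k) 4))
      (mul_pos (mul_pos (pow_pos hσ2 2) hKpos) hSpos)
  refine ⟨htend, hLpos, ?_, ?_⟩
  · have hcl : ContinuousAt (fun x : ℝ => Real.logb 2 (1 + x)) L := by
      apply ContinuousAt.div_const
      exact (Real.continuousAt_log (by linarith)).comp (by fun_prop)
    exact hcl.tendsto.comp htend
  · exact (Real.logb_pos one_lt_two (by linarith)).ne'
end
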